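/- Let f : B_X(R) → ℂ be holomorphic on the ball of radius R in the l¹-sum X of finite dimensional Banach spaces, and let f_k(x) = ∫_T f(e^{2πit}x) e^{-2πi(k·t)} dt be its k-homogeneous components. Then for every sequence σ with 0 ≤ σ_n < 1, σ_n → 0, we have sup_k [f_k] σ^k R^{‖k‖} < ∞, where [f_k] = sup_{‖x‖≤1} |f_k(x)|. -/

import Mathlib

open Filter MeasureTheory
open scoped BigOperators ENNReal

/-- Rotation of an element of the `l¹`-sum by a point of the infinite torus
`T = (ℝ/ℤ)^∞`: `(e^{2πit}x)_n = e^{2πit_n} x_n`. -/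
noncomputable def torusRot (E : ℕ → Type) [∀ n, NormedAddCommGroup (E n)]
    [∀ n, NormedSpace ℂ (E n)]
    (t : ∀ _ : ℕ, AddCircle (1 : ℝ)) (x : lp E 1) : lp E 1 :=
  ⟨fun n => (AddCircle.toCircle (t n) : ℂ) • x n, by
    apply memℓp_gen
    have : (fun n => ‖(AddCircle.toCircle (t n) : ℂ) • x n‖ ^ (1 : ℝ≥0∞).toReal)
        = fun n => ‖x n‖ ^ (1 : ℝ≥0∞).toReal := by
      funext n
      simp [norm_smul, Circle.norm_coe]
    rw [this]
    exact (lp.memℓp x).summable (by norm_num)⟩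

set_option linter.unusedSectionVars false
set_option maxHeartbeats 1000000

section helpers
variable (E : ℕ → Type) [∀ n, NormedAddCommGroup (E n)] [∀ n, NormedSpace ℂ (E n)]

lemma hasSum_norm_one (z : lp E 1) : HasSum (fun n => ‖z n‖) ‖z‖ := by
  have := lp.hasSum_norm (p := 1) (E := E) (by norm_num) z
  simpa using this

lemma lp_single_sub (i : ℕ) (a b : E i) :
    lp.single (E := E) 1 i (a - b) = lp.single 1 i a - lp.single 1 i b := by
  apply lp.ext
  funext j
  by_cases h : j = i
  · subst h; simp [lp.single_apply_self]
  · simp [lp.single_apply_ne _ _ _ h]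

lemma lp_single_isometry (i : ℕ) : Isometry (fun a : E i => lp.single (E := E) 1 i a) := by
  refine Isometry.of_dist_eq fun a b => ?_
  rw [dist_eq_norm, dist_eq_norm, ← lp_single_sub]
  have := lp.norm_single (p := 1) (E := E) (by norm_num)
    i (a - b)
  exact this

/-- coordinate-wise scaling by a sequence bounded by 1 -/
noncomputable def cscale (c : ℕ → ℝ) (hc : ∀ n, |c n| ≤ 1) (x : lp E 1) : lp E 1 :=
  ⟨fun n => (c n : ℂ) • x n, by
    apply memℓp_gen
    have hx : Summable fun n => ‖x n‖ := by
      simpa using (lp.memℓp x).summable (p := 1) (by norm_num)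
    have : Summable fun n => ‖(c n : ℂ) • x n‖ := by
      refine Summable.of_nonneg_of_le (fun n => norm_nonneg _) (fun n => ?_) hx
      rw [norm_smul, Complex.norm_real, Real.norm_eq_abs]
      calc |c n| * ‖x n‖ ≤ 1 * ‖x n‖ := mul_le_mul_of_nonneg_right (hc n) (norm_nonneg _)
        _ = ‖x n‖ := one_mul _
    simpa using this⟩

lemma cscale_apply (c : ℕ → ℝ) (hc : ∀ n, |c n| ≤ 1) (x : lp E 1) (n : ℕ) :
    cscale E c hc x n = (c n : ℂ) • x n := rfl

lemma cscale_norm_le (c : ℕ → ℝ) (hc : ∀ n, |c n| ≤ 1) (x : lp E 1)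
    (s : ℝ) (hs : ∀ n, |c n| ≤ s) : ‖cscale E c hc x‖ ≤ s * ‖x‖ := by
  have h1 := hasSum_norm_one E (cscale E c hc x)
  have h2 := (hasSum_norm_one E x).mul_left s
  refine hasSum_le (fun n => ?_) h1 h2
  rw [cscale_apply, norm_smul, Complex.norm_real, Real.norm_eq_abs]
  exact mul_le_mul_of_nonneg_right (hs n) (norm_nonneg _)

variable [∀ n, FiniteDimensional ℂ (E n)]

lemma totallyBounded_scaled (σ : ℕ → ℝ) (hσ1 : ∀ n, |σ n| ≤ 1) (hσnn : ∀ n, 0 ≤ σ n)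
    (hσ0 : Tendsto σ atTop (nhds 0)) (R : ℝ) (hR : 0 < R) :
    TotallyBounded {z : lp E 1 | ∃ x : lp E 1, ‖x‖ ≤ 1 ∧
      z = (R : ℂ) • cscale E σ hσ1 x} := by
  haveI : ∀ n, ProperSpace (E n) := fun n => FiniteDimensional.proper ℂ (E n)
  rw [Metric.totallyBounded_iff]
  intro ε hε
  have hε3 : (0 : ℝ) < ε / (3 * R) := by positivity
  obtain ⟨N, hN⟩ := (hσ0.eventually_lt_const hε3).exists_forall_of_atTop
  -- the truncation map
  set φ : (∀ n, E n) → lp E 1 := fun v => ∑ i ∈ Finset.range N, lp.single 1 i (v i) with hφ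
  have hφc : Continuous φ :=
    continuous_finset_sum _ fun i _ => ((lp_single_isometry E i).continuous).comp
      (continuous_apply i)
  have hK₀ : IsCompact (Set.pi Set.univ fun n => Metric.closedBall (0 : E n) (σ n * R)) :=
    isCompact_univ_pi fun n => isCompact_closedBall _ _
  have hKc : IsCompact (φ '' (Set.pi Set.univ fun n => Metric.closedBall (0 : E n) (σ n * R))) :=
    hK₀.image hφc
  obtain ⟨t, htf, htc⟩ := Metric.totallyBounded_iff.1 hKc.totallyBounded (ε / 3) (by positivity)
  refine ⟨t, htf, ?_⟩
  rintro z ⟨x, hx1, rfl⟩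
  set y : lp E 1 := (R : ℂ) • cscale E σ hσ1 x with hy
  -- coordinates of y are small
  have hyn : ∀ n, ‖y n‖ ≤ σ n * R * ‖x n‖ := by
    intro n
    have : y n = (R : ℂ) • ((σ n : ℂ) • x n) := by
      rw [hy, lp.coeFn_smul]; rfl
    rw [this, norm_smul, norm_smul, Complex.norm_real, Complex.norm_real,
      Real.norm_eq_abs, Real.norm_eq_abs, abs_of_pos hR]
    rw [abs_of_nonneg (hσnn n)]
    ring_nf
    exact le_rfl
  have hxn : ∀ n, ‖x n‖ ≤ 1 := fun n =>
    (lp.norm_apply_le_norm one_ne_zero x n).trans hx1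
  -- the truncated element lies in the compact set
  have hmem : φ (fun n => y n) ∈
      φ '' (Set.pi Set.univ fun n => Metric.closedBall (0 : E n) (σ n * R)) := by
    refine ⟨fun n => y n, fun n _ => ?_, rfl⟩
    rw [Metric.mem_closedBall, dist_zero_right]
    calc ‖y n‖ ≤ σ n * R * ‖x n‖ := hyn n
      _ ≤ σ n * R * 1 := by
          have : 0 ≤ σ n * R := mul_nonneg (hσnn n) hR.le
          exact mul_le_mul_of_nonneg_left (hxn n) this
      _ = σ n * R := mul_one _
  obtain ⟨c, hct, hc⟩ := Set.mem_iUnion₂.1 (htc hmem)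
  refine Set.mem_iUnion₂.2 ⟨c, hct, ?_⟩
  -- tail estimate : ‖y - φ y‖ ≤ ε/3
  have hsum_y : Summable fun n => ‖y n‖ := (hasSum_norm_one E y).summable
  have hsum_x : Summable fun n => ‖x n‖ := (hasSum_norm_one E x).summable
  have htail : ‖y - φ (fun n => y n)‖ ≤ ε / 3 := by
    have hkey := lp.norm_sub_norm_compl_sub_single (p := 1) (E := E) (by norm_num) y
      (Finset.range N)
    simp only [ENNReal.toReal_one, Real.rpow_one] at hkey
    have hφy : φ (fun n => y n) = ∑ i ∈ Finset.range N, lp.single 1 i (y i) := rfl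
    rw [hφy]
    have hsplit := Summable.sum_add_tsum_nat_add (f := fun n => ‖y n‖) N hsum_y
    have hval : ‖y‖ = ∑' n, ‖y n‖ := (hasSum_norm_one E y).tsum_eq.symm
    have htail2 : (∑' i, ‖y (i + N)‖) ≤ ε / 3 := by
      have h1 : Summable fun i => ‖y (i + N)‖ := (summable_nat_add_iff N).2 hsum_y
      have h2 : Summable fun i => (ε / 3) * ‖x (i + N)‖ :=
        ((summable_nat_add_iff N).2 hsum_x).mul_left _
      have hle : ∀ i, ‖y (i + N)‖ ≤ (ε / 3) * ‖x (i + N)‖ := by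
        intro i
        calc ‖y (i + N)‖ ≤ σ (i + N) * R * ‖x (i + N)‖ := hyn _
          _ ≤ (ε / (3 * R)) * R * ‖x (i + N)‖ := by
              have := (hN (i + N) (Nat.le_add_left N i)).le
              have := mul_le_mul_of_nonneg_right
                (mul_le_mul_of_nonneg_right this hR.le) (norm_nonneg (x (i + N)))
              exact this
          _ = (ε / 3) * ‖x (i + N)‖ := by field_simp
      calc (∑' i, ‖y (i + N)‖) ≤ ∑' i, (ε / 3) * ‖x (i + N)‖ := h1.tsum_le_tsum hle h2
        _ = (ε / 3) * ∑' i, ‖x (i + N)‖ := tsum_mul_left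
        _ ≤ (ε / 3) * ‖x‖ := by
            refine mul_le_mul_of_nonneg_left ?_ (by positivity)
            have := Summable.sum_add_tsum_nat_add (f := fun n => ‖x n‖) N hsum_x
            have hx' : ‖x‖ = ∑' n, ‖x n‖ := (hasSum_norm_one E x).tsum_eq.symm
            have hhead : 0 ≤ ∑ i ∈ Finset.range N, ‖x i‖ :=
              Finset.sum_nonneg fun _ _ => norm_nonneg _
            linarith
        _ ≤ (ε / 3) * 1 := mul_le_mul_of_nonneg_left hx1 (by positivity)
        _ = ε / 3 := mul_one _
    -- from hkey : ‖y‖ - ‖y - head‖ = head-sum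
    have hheadsum : ∑ i ∈ Finset.range N, ‖y i‖ + ∑' i, ‖y (i + N)‖ = ‖y‖ := by
      rw [hval]; exact hsplit
    linarith [hkey]
  rw [Metric.mem_ball]
  calc dist y c ≤ dist y (φ (fun n => y n)) + dist (φ (fun n => y n)) c := dist_triangle _ _ _
    _ ≤ ε / 3 + dist (φ (fun n => y n)) c := by
        rw [dist_eq_norm]; exact add_le_add_left htail _
    _ < ε / 3 + ε / 3 := by
        exact add_lt_add_right (Metric.mem_ball.1 hc) _
    _ ≤ ε := by linarith

lemma norm_torusRot (t : ∀ _ : ℕ, AddCircle (1 : ℝ)) (x : lp E 1) :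
    ‖torusRot E t x‖ = ‖x‖ := by
  refine (hasSum_norm_one E (torusRot E t x)).unique ?_
  have : (fun n => ‖torusRot E t x n‖) = fun n => ‖x n‖ := by
    funext n
    show ‖(AddCircle.toCircle (t n) : ℂ) • x n‖ = ‖x n‖
    simp [norm_smul, Circle.norm_coe]
  rw [this]
  exact hasSum_norm_one E x

lemma torusRot_smul_cscale (σ : ℕ → ℝ) (hσ1 : ∀ n, |σ n| ≤ 1) (R : ℝ)
    (t : ∀ _ : ℕ, AddCircle (1 : ℝ)) (x : lp E 1) :
    torusRot E t ((R : ℂ) • cscale E σ hσ1 x)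
      = (R : ℂ) • cscale E σ hσ1 (torusRot E t x) := by
  apply lp.ext
  funext n
  show (AddCircle.toCircle (t n) : ℂ) • (((R : ℂ) • cscale E σ hσ1 x) n)
      = ((R : ℂ) • cscale E σ hσ1 (torusRot E t x)) n
  rw [lp.coeFn_smul, lp.coeFn_smul]
  show (AddCircle.toCircle (t n) : ℂ) • ((R : ℂ) • ((σ n : ℂ) • x n))
      = (R : ℂ) • ((σ n : ℂ) • ((AddCircle.toCircle (t n) : ℂ) • x n))
  rw [smul_smul, smul_smul, smul_smul, smul_smul]
  ring_nf
end helpers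

/-- If `f` is holomorphic on `B_X(R)` in the `l¹`-sum `X` of finite dimensional
Banach spaces, and `f_k(x) = ∫_T f(e^{2πit}x)e^{-2πi(k·t)}dt` are its `k`-homogeneous
components (Haar probability measure on the infinite torus), then for every `σ` with
`0 ≤ σ_n < 1`, `σ_n → 0`, one has `sup_k [f_k] σ^k R^{‖k‖} < ∞`. -/
theorem components_sup_estimate (E : ℕ → Type) [∀ n, NormedAddCommGroup (E n)]
    [∀ n, NormedSpace ℂ (E n)] [∀ n, FiniteDimensional ℂ (E n)]
    (R : ℝ) (hR : 0 < R)
    (f : lp E 1 → ℂ) (hf : DifferentiableOn ℂ f (Metric.ball 0 R))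
    (μ : Measure (∀ _ : ℕ, AddCircle (1 : ℝ)))
    [μ.IsAddHaarMeasure] [IsProbabilityMeasure μ]
    (fk : (ℕ →₀ ℕ) → lp E 1 → ℂ)
    -- each `f_k` is holomorphic and `k`-homogeneous on all of `X`
    (hfkhom : ∀ k : ℕ →₀ ℕ, Differentiable ℂ (fk k) ∧
      ∀ (x y : lp E 1) (lam : ℕ → ℂ), (∀ n, y n = lam n • x n) →
        fk k y = (∏ n ∈ k.support, lam n ^ k n) * fk k x)
    -- `f_k` is the `k`-homogeneous component of `f` on `B_X(R)`
    (hfk : ∀ (k : ℕ →₀ ℕ) (x : lp E 1), x ∈ Metric.ball (0 : lp E 1) R →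
      fk k x = ∫ t, f (torusRot E t x) *
        (AddCircle.toCircle (∑ n ∈ k.support, (k n : ℤ) • t n) : ℂ)⁻¹ ∂μ)
    (σ : ℕ → ℝ) (hσ : ∀ n, 0 ≤ σ n ∧ σ n < 1) (hσ0 : Tendsto σ atTop (nhds 0)) :
    ∃ M : ℝ, ∀ (k : ℕ →₀ ℕ) (x : lp E 1), ‖x‖ ≤ 1 →
      ‖fk k x‖ * (∏ n ∈ k.support, σ n ^ k n) *
        R ^ (k.sum fun _ v => v : ℕ) ≤ M := by
  have hσnn : ∀ n, 0 ≤ σ n := fun n => (hσ n).1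
  have hσ1 : ∀ n, |σ n| ≤ 1 := fun n => by
    rw [abs_of_nonneg (hσnn n)]; exact (hσ n).2.le
  -- a uniform bound `s < 1` for `σ`
  obtain ⟨N₀, hN₀⟩ := (hσ0.eventually_lt_const (show (0:ℝ) < 1/2 by norm_num)).exists_forall_of_atTop
  set s : ℝ := ((Finset.range (N₀ + 1)).sup' (by simp) σ) ⊔ (1/2) with hs_def
  have hs1 : s < 1 := by
    apply max_lt _ (by norm_num)
    rw [Finset.sup'_lt_iff]
    intro n _
    exact (hσ n).2
  have hsle : ∀ n, σ n ≤ s := by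
    intro n
    rcases lt_or_ge n (N₀ + 1) with h | h
    · exact le_trans (Finset.le_sup' σ (Finset.mem_range.2 h)) le_sup_left
    · exact le_trans (hN₀ n (by omega)).le le_sup_right
  have hs0 : (0:ℝ) ≤ s := le_trans (by norm_num) le_sup_right
  -- the relatively compact set
  set S : Set (lp E 1) := {z : lp E 1 | ∃ x : lp E 1, ‖x‖ ≤ 1 ∧
      z = (R : ℂ) • cscale E σ hσ1 x} with hS_def
  have hTB : TotallyBounded S := totallyBounded_scaled E σ hσ1 hσnn hσ0 R hR
  have hSsub : S ⊆ Metric.closedBall 0 (s * R) := by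
    rintro z ⟨x, hx1, rfl⟩
    rw [Metric.mem_closedBall, dist_zero_right, norm_smul, Complex.norm_real,
      Real.norm_eq_abs, abs_of_pos hR]
    have h1 : ‖cscale E σ hσ1 x‖ ≤ s * ‖x‖ := cscale_norm_le E σ hσ1 x s
      (fun n => by rw [abs_of_nonneg (hσnn n)]; exact hsle n)
    calc R * ‖cscale E σ hσ1 x‖ ≤ R * (s * ‖x‖) := by
          exact mul_le_mul_of_nonneg_left h1 hR.le
      _ ≤ R * (s * 1) := by
          exact mul_le_mul_of_nonneg_left (mul_le_mul_of_nonneg_left hx1 hs0) hR.le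
      _ = s * R := by ring
  haveI : Fact ((1:ℝ≥0∞) ≤ 1) := ⟨le_rfl⟩
  have hKcomp : IsCompact (closure S) :=
    TotallyBounded.isCompact_of_isClosed hTB.closure isClosed_closure
  have hKsub : closure S ⊆ Metric.ball 0 R := by
    refine (closure_minimal hSsub Metric.isClosed_closedBall).trans ?_
    exact Metric.closedBall_subset_ball (by nlinarith)
  obtain ⟨C, hC⟩ := hKcomp.exists_bound_of_continuousOn (hf.continuousOn.mono hKsub)
  refine ⟨C, fun k x hx1 => ?_⟩
  set y : lp E 1 := (R : ℂ) • cscale E σ hσ1 x with hy_def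
  have hyS : y ∈ S := ⟨x, hx1, rfl⟩
  -- homogeneity step
  have hylam : ∀ n, y n = ((σ n * R : ℝ) : ℂ) • x n := by
    intro n
    rw [hy_def, lp.coeFn_smul]
    show (R : ℂ) • ((σ n : ℂ) • x n) = ((σ n * R : ℝ) : ℂ) • x n
    rw [smul_smul]
    push_cast
    ring_nf
  have hfkeq := (hfkhom k).2 x y (fun n => ((σ n * R : ℝ) : ℂ)) hylam
  have habs : ‖fk k y‖ = ‖fk k x‖ *
      (∏ n ∈ k.support, σ n ^ k n) * R ^ (k.sum fun _ v => v : ℕ) := by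
    rw [hfkeq, norm_mul, norm_prod]
    have h1 : ∀ n ∈ k.support, ‖((σ n * R : ℝ) : ℂ) ^ k n‖
        = σ n ^ k n * R ^ k n := by
      intro n _
      rw [norm_pow, Complex.norm_real, Real.norm_eq_abs, abs_of_nonneg (mul_nonneg (hσnn n) hR.le), mul_pow]
    rw [Finset.prod_congr rfl h1, Finset.prod_mul_distrib, Finset.prod_pow_eq_pow_sum]
    have h2 : (k.sum fun _ v => v : ℕ) = ∑ n ∈ k.support, k n := rfl
    rw [h2]
    ring
  rw [← habs]
  -- integral bound
  have hyball : y ∈ Metric.ball (0 : lp E 1) R :=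
    Metric.closedBall_subset_ball (by nlinarith) (hSsub hyS)
  rw [hfk k y hyball]
  have hbound : ∀ t, ‖f (torusRot E t y) *
      (AddCircle.toCircle (∑ n ∈ k.support, (k n : ℤ) • t n) : ℂ)⁻¹‖ ≤ C := by
    intro t
    rw [norm_mul, norm_inv]
    have hcirc : ‖(AddCircle.toCircle (∑ n ∈ k.support, (k n : ℤ) • t n) : ℂ)‖ = 1 := by
      rw [Circle.norm_coe]
    rw [hcirc, inv_one, mul_one]
    have hrotS : torusRot E t y ∈ S := by
      rw [hy_def, torusRot_smul_cscale]
      exact ⟨torusRot E t x, by rw [norm_torusRot]; exact hx1, rfl⟩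
    exact hC _ (subset_closure hrotS)
  calc ‖∫ t, f (torusRot E t y) *
        (AddCircle.toCircle (∑ n ∈ k.support, (k n : ℤ) • t n) : ℂ)⁻¹ ∂μ‖
      ≤ C * (μ Set.univ).toReal :=
        norm_integral_le_of_norm_le_const (Eventually.of_forall hbound)
    _ = C := by simp
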